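/- Let Y be a finite menu with default 0, let C be a random subset of Y containing 0 with distribution Pr independent of a parameter w, and suppose the conditional choice given C is argmax of utilities that diverge as w → w̄ at menu-specific rates, so that in the limit the agent picks the ≻-best element of C\{0} (or 0 if C = {0}) for a given strict linear order ≻ on Y\{0}. If v is the ≻-minimum of Y\{0}, then lim_{w→w̄} P(v|w) = Pr(C = {0, v}) and lim_{w→w̄} P(0|w) = Pr(C = {0}). Consequently, by varying ≻ over all linear orders and recursing over set sizes, Pr(C = S) is identified for every S ⊆ Y containing 0. -/

import Mathlib

open Finset
open scoped Classical

/-- The limiting (deterministic-preference) choice probability of `v`: the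
agent picks the `σ`-best element of `C \ {d}` (and the default `d` only when
`C = {d}`), where the strict ranking is given by an injective score `σ`. -/
noncomputable def limP {α : Type*} [Fintype α] [DecidableEq α]
    (d : α) (Pr : Finset α → ℝ) (σ : α → ℕ) (v : α) : ℝ :=
  ∑ C ∈ (Finset.univ : Finset α).powerset,
    (if C = {d} then (if v = d then (1 : ℝ) else 0)
     else if v ∈ C.erase d ∧ ∀ u ∈ C.erase d, σ u ≤ σ v then 1 else 0) * Pr C

/-- Part 2: the default's limiting probability is `Pr {d}`. -/
private lemma limP_default {α : Type*} [Fintype α] [DecidableEq α]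
    (d : α) (Pr : Finset α → ℝ) (σ : α → ℕ) :
    limP d Pr σ d = Pr {d} := by
  rw [limP, Finset.sum_eq_single ({d} : Finset α)]
  · simp
  · intro C _ hC
    have : d ∉ C.erase d := Finset.notMem_erase d C
    simp [hC, this]
  · intro h
    exact absurd (Finset.mem_powerset.mpr (Finset.subset_univ _)) h

/-- Part 1: if `v` is σ-worst among nondefaults, `limP v = Pr (insert d {v})`. -/
private lemma limP_worst {α : Type*} [Fintype α] [DecidableEq α]
    (d : α) (Pr : Finset α → ℝ) (hsupp : ∀ C : Finset α, d ∉ C → Pr C = 0)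
    (σ : α → ℕ) (hσ : Function.Injective σ)
    (v : α) (hvd : v ≠ d) (hworst : ∀ u ∈ Finset.univ.erase d, σ v ≤ σ u) :
    limP d Pr σ v = Pr (insert d {v}) := by
  rw [limP]
  have key : ∀ C ∈ (Finset.univ : Finset α).powerset,
      (if C = {d} then (if v = d then (1 : ℝ) else 0)
       else if v ∈ C.erase d ∧ ∀ u ∈ C.erase d, σ u ≤ σ v then 1 else 0) * Pr C
      = if C = insert d {v} then Pr C else 0 := by
    intro C _
    by_cases hC : C = insert d {v}
    · subst hC
      have h1 : (insert d {v} : Finset α) ≠ {d} := by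
        intro h
        have : v ∈ ({d} : Finset α) := h ▸ (by simp)
        exact hvd (by simpa using this)
      have h2 : (insert d {v} : Finset α).erase d = {v} :=
        Finset.erase_insert (by simp [Ne.symm hvd])
      simp [h1, h2]
    · rw [if_neg hC]
      by_cases hCd : C = {d}
      · simp [hCd, hvd]
      · rw [if_neg hCd]
        by_cases hcond : v ∈ C.erase d ∧ ∀ u ∈ C.erase d, σ u ≤ σ v
        · -- then C.erase d = {v}; since C ≠ insert d {v}, d ∉ C, so Pr C = 0
          obtain ⟨hvC, hmax⟩ := hcond
          have herase : C.erase d = {v} := by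
            apply Finset.eq_singleton_iff_unique_mem.mpr
            refine ⟨hvC, fun u hu => ?_⟩
            have h1 : σ u ≤ σ v := hmax u hu
            have h2 : σ v ≤ σ u := hworst u (Finset.mem_erase.mpr
              ⟨(Finset.mem_erase.mp hu).1, Finset.mem_univ u⟩)
            exact hσ (le_antisymm h1 h2)
          have hdC : d ∉ C := by
            intro hdC
            apply hC
            have := Finset.insert_erase hdC
            rw [herase] at this
            exact this.symm
          rw [hsupp C hdC]
          simp
        · rw [if_neg hcond, zero_mul]
  rw [Finset.sum_congr rfl key, Finset.sum_ite_eq'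
    ((Finset.univ : Finset α).powerset) (insert d {v}) Pr]
  simp

/-- Key identity for identification: if `σ v` dominates exactly the scores of
elements of `S`, then `limP v` sums `Pr` over subsets of `S` containing `d, v`. -/
private lemma limP_sum_subsets {α : Type*} [Fintype α] [DecidableEq α]
    (d : α) (Pr : Finset α → ℝ) (hsupp : ∀ C : Finset α, d ∉ C → Pr C = 0)
    (S : Finset α) (hdS : d ∈ S)
    (v : α) (hvd : v ≠ d)
    (σ : α → ℕ) (hmax : ∀ u : α, σ u ≤ σ v ↔ u ∈ S) :
    limP d Pr σ v = ∑ C ∈ S.powerset, (if d ∈ C ∧ v ∈ C then Pr C else 0) := by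
  rw [limP]
  have key : ∀ C ∈ (Finset.univ : Finset α).powerset,
      (if C = {d} then (if v = d then (1 : ℝ) else 0)
       else if v ∈ C.erase d ∧ ∀ u ∈ C.erase d, σ u ≤ σ v then 1 else 0) * Pr C
      = if C ⊆ S ∧ d ∈ C ∧ v ∈ C then Pr C else 0 := by
    intro C _
    by_cases hdC : d ∈ C
    · by_cases hCd : C = {d}
      · have : ¬ (C ⊆ S ∧ d ∈ C ∧ v ∈ C) := by
          rintro ⟨-, -, hv⟩
          rw [hCd] at hv
          exact hvd (by simpa using hv)
        simp [hCd, hvd, this]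
      · rw [if_neg hCd]
        by_cases hcond : v ∈ C.erase d ∧ ∀ u ∈ C.erase d, σ u ≤ σ v
        · obtain ⟨hvC, hall⟩ := hcond
          have hsub : C ⊆ S := by
            intro u hu
            by_cases hud : u = d
            · exact hud ▸ hdS
            · exact (hmax u).mp (hall u (Finset.mem_erase.mpr ⟨hud, hu⟩))
          have : C ⊆ S ∧ d ∈ C ∧ v ∈ C := ⟨hsub, hdC, (Finset.mem_erase.mp hvC).2⟩
          rw [if_pos ⟨hvC, hall⟩, one_mul, if_pos this]
        · rw [if_neg hcond, zero_mul]
          have : ¬ (C ⊆ S ∧ d ∈ C ∧ v ∈ C) := by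
            rintro ⟨hsub, -, hvC⟩
            exact hcond ⟨Finset.mem_erase.mpr ⟨hvd, hvC⟩,
              fun u hu => (hmax u).mpr (hsub (Finset.mem_erase.mp hu).2)⟩
          simp [this]
    · rw [hsupp C hdC, mul_zero]
      have : ¬ (C ⊆ S ∧ d ∈ C ∧ v ∈ C) := by rintro ⟨-, h, -⟩; exact hdC h
      simp [this]
  rw [Finset.sum_congr rfl key]
  rw [← Finset.sum_subset (Finset.powerset_mono.mpr (Finset.subset_univ S))]
  · apply Finset.sum_congr rfl
    intro C hC
    have : C ⊆ S := Finset.mem_powerset.mp hC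
    by_cases h : d ∈ C ∧ v ∈ C
    · simp [this, h]
    · simp [h]
  · intro C _ hC
    have : ¬ C ⊆ S := fun h => hC (Finset.mem_powerset.mpr h)
    simp [this]

/-- Construction of a suitable score function. -/
private lemma exists_score {α : Type*} [Fintype α] [DecidableEq α]
    (S : Finset α) (v : α) (hvS : v ∈ S) :
    ∃ σ : α → ℕ, Function.Injective σ ∧ ∀ u : α, σ u ≤ σ v ↔ u ∈ S := by
  classical
  set n := Fintype.card α with hn
  set e : α → ℕ := fun u => ((Fintype.equivFin α) u : ℕ) with he
  have helt : ∀ u, e u < n := fun u => ((Fintype.equivFin α) u).2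
  have heinj : Function.Injective e := fun a b h =>
    (Fintype.equivFin α).injective (Fin.ext h)
  refine ⟨fun u => if u = v then n else if u ∈ S then e u else n + 1 + e u, ?_, ?_⟩
  · intro a b hab
    simp only at hab
    by_cases ha : a = v <;> by_cases hb : b = v
    · rw [ha, hb]
    · rw [if_pos ha, if_neg hb] at hab
      by_cases hbS : b ∈ S
      · rw [if_pos hbS] at hab; exact absurd hab.symm (helt b).ne
      · rw [if_neg hbS] at hab; omega
    · rw [if_neg ha, if_pos hb] at hab
      by_cases haS : a ∈ S
      · rw [if_pos haS] at hab; exact absurd hab (helt a).ne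
      · rw [if_neg haS] at hab; omega
    · rw [if_neg ha, if_neg hb] at hab
      by_cases haS : a ∈ S <;> by_cases hbS : b ∈ S
      · rw [if_pos haS, if_pos hbS] at hab; exact heinj hab
      · rw [if_pos haS, if_neg hbS] at hab; have := helt a; omega
      · rw [if_neg haS, if_pos hbS] at hab; have := helt b; omega
      · rw [if_neg haS, if_neg hbS] at hab; exact heinj (by omega)
  · intro u
    have hv : (if v = v then n else if v ∈ S then e v else n + 1 + e v) = n :=
      if_pos rfl
    simp only [if_true]
    by_cases hu : u = v
    · subst hu
      simp [hvS]
    · rw [if_neg hu]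
      by_cases huS : u ∈ S
      · rw [if_pos huS]
        simp [huS, (helt u).le]
      · rw [if_neg huS]
        simp only [huS, iff_false, not_le]
        omega

theorem limit_choice_identifies_consideration_distribution
    {α : Type*} [Fintype α] [DecidableEq α] (d : α)
    (Pr : Finset α → ℝ)
    (hsupp : ∀ C : Finset α, d ∉ C → Pr C = 0) :
    (∀ σ : α → ℕ, Function.Injective σ →
      ∀ v : α, v ≠ d → (∀ u ∈ Finset.univ.erase d, σ v ≤ σ u) →
        limP d Pr σ v = Pr (insert d {v})) ∧
    (∀ σ : α → ℕ, Function.Injective σ → limP d Pr σ d = Pr {d}) ∧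
    (∀ Pr' : Finset α → ℝ, (∀ C : Finset α, d ∉ C → Pr' C = 0) →
      (∀ σ : α → ℕ, Function.Injective σ → ∀ v : α, limP d Pr σ v = limP d Pr' σ v) →
      ∀ S : Finset α, d ∈ S → Pr S = Pr' S) := by
  refine ⟨fun σ hσ v hvd hworst => limP_worst d Pr hsupp σ hσ v hvd hworst,
    fun σ _ => limP_default d Pr σ, ?_⟩
  intro Pr' hsupp' heq S
  induction S using Finset.strongInduction with
  | _ S ih =>
    intro hdS
    by_cases hS : S = {d}
    · subst hS
      obtain ⟨σ, hσinj, -⟩ := exists_score ({d} : Finset α) d (by simp)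
      have := heq σ hσinj d
      rwa [limP_default, limP_default] at this
    · -- pick v ∈ S, v ≠ d
      obtain ⟨v, hvS, hvd⟩ : ∃ v ∈ S, v ≠ d := by
        by_contra h
        push_neg at h
        exact hS (Finset.eq_singleton_iff_unique_mem.mpr ⟨hdS, fun u hu => h u hu⟩)
      obtain ⟨σ, hσinj, hmax⟩ := exists_score S v hvS
      have hkey : (∑ C ∈ S.powerset, (if d ∈ C ∧ v ∈ C then Pr C else 0))
          = ∑ C ∈ S.powerset, (if d ∈ C ∧ v ∈ C then Pr' C else 0) := by
        rw [← limP_sum_subsets d Pr hsupp S hdS v hvd σ hmax,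
          ← limP_sum_subsets d Pr' hsupp' S hdS v hvd σ hmax]
        exact heq σ hσinj v
      have hmemS : S ∈ S.powerset := Finset.mem_powerset.mpr le_rfl
      rw [← Finset.add_sum_erase _ _ hmemS, ← Finset.add_sum_erase _ _ hmemS] at hkey
      have hrest : (∑ C ∈ S.powerset.erase S, (if d ∈ C ∧ v ∈ C then Pr C else 0))
          = ∑ C ∈ S.powerset.erase S, (if d ∈ C ∧ v ∈ C then Pr' C else 0) := by
        apply Finset.sum_congr rfl
        intro C hC
        obtain ⟨hCne, hCsub⟩ := Finset.mem_erase.mp hC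
        have hss : C ⊂ S := lt_of_le_of_ne (Finset.mem_powerset.mp hCsub) hCne
        by_cases h : d ∈ C ∧ v ∈ C
        · rw [if_pos h, if_pos h, ih C hss h.1]
        · rw [if_neg h, if_neg h]
      rw [hrest, if_pos ⟨hdS, hvS⟩, if_pos ⟨hdS, hvS⟩] at hkey
      exact add_right_cancel hkey
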